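/- arXiv:2106.02237 — 2 statements merged into one kernel-verified Lean document; each statement's English description precedes it below -/
import Mathlib

section
/- Suppose y = A x + n with x ∈ ℂ^N, n ∈ ℂ^M, and x_i = x + f_i for vectors f_1, …, f_t ∈ ℂ^N. Then for every t ≥ 1 with ε_t ≠ 0, the MAMP LMLE output satisfies r_t = x + g_t where the estimation error is g_t = (1/ε_t)(F_t n + Σ_{i=1}^{t} H_{t,i} f_i). -/
open Matrix Finset

private lemma sum_mulVec' {m n : ℕ} (s : Finset ℕ) (G : ℕ → Matrix (Fin m) (Fin n) ℂ)
    (v : Fin n → ℂ) : (∑ i ∈ s, G i) *ᵥ v = ∑ i ∈ s, G i *ᵥ v := by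
  ext j
  simp [Matrix.mulVec, dotProduct, Finset.sum_apply, Finset.sum_mul, Matrix.sum_apply]
  rw [Finset.sum_comm]

private lemma mulVec_sum' {m n : ℕ} (s : Finset ℕ) (A : Matrix (Fin m) (Fin n) ℂ)
    (g : ℕ → Fin n → ℂ) : A *ᵥ (∑ i ∈ s, g i) = ∑ i ∈ s, A *ᵥ g i := by
  ext j
  simp [Matrix.mulVec, dotProduct, Finset.sum_apply, Finset.mul_sum]
  rw [Finset.sum_comm]

/-- if `y = A x + n` and `x_i = x + f_i`, then for every `t ≥ 1` with
`ε_t ≠ 0` the MAMP LMLE output satisfies `r_t = x + g_t` with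
`g_t = (1/ε_t)(F_t n + ∑_{i=1}^t H_{t,i} f_i)`. -/
theorem mamp_lmle_error_decomposition
    (M N : ℕ) (hM : 0 < M) (hN : 0 < N)
    (A : Matrix (Fin M) (Fin N) ℂ) (lamd : ℝ)
    (B : Matrix (Fin M) (Fin M) ℂ)
    (hB : B = (lamd : ℂ) • (1 : Matrix (Fin M) (Fin M) ℂ) - A * Aᴴ)
    (W : ℕ → Matrix (Fin N) (Fin N) ℂ) (hW : ∀ t, W t = Aᴴ * B ^ t * A)
    (w : ℕ → ℂ) (hw : ∀ t, w t = (N : ℂ)⁻¹ * (W t).trace)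
    (θ ξ : ℕ → ℝ)
    (ϑ : ℕ → ℕ → ℝ)
    (hϑ : ∀ t i, 1 ≤ i → i ≤ t → ϑ t i = ξ i * ∏ τ ∈ Finset.Icc (i + 1) t, θ τ)
    (p : ℕ → ℕ → ℂ)
    (hp : ∀ t i, 1 ≤ i → i ≤ t → p t i = (ϑ t i : ℂ) * w (t - i))
    (ε : ℕ → ℂ) (hε : ∀ t, 1 ≤ t → ε t = ∑ i ∈ Finset.Icc 1 t, p t i)
    (F : ℕ → Matrix (Fin N) (Fin M) ℂ)
    (hF : ∀ t, 1 ≤ t → F t = ∑ i ∈ Finset.Icc 1 t, (ϑ t i : ℂ) • (Aᴴ * B ^ (t - i)))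
    (H : ℕ → ℕ → Matrix (Fin N) (Fin N) ℂ)
    (hH : ∀ t i, 1 ≤ i → i ≤ t →
      H t i = (ϑ t i : ℂ) • (w (t - i) • (1 : Matrix (Fin N) (Fin N) ℂ) - W (t - i)))
    (xtrue : Fin N → ℂ) (n : Fin M → ℂ) (y : Fin M → ℂ)
    (hy : y = A *ᵥ xtrue + n)
    (f : ℕ → Fin N → ℂ) (x : ℕ → Fin N → ℂ)
    (hx : ∀ i, x i = xtrue + f i)
    (rhat : ℕ → Fin M → ℂ)
    (h0 : rhat 0 = 0)
    (hrec : ∀ t, 1 ≤ t →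
      rhat t = (θ t : ℂ) • (B *ᵥ rhat (t - 1)) + (ξ t : ℂ) • (y - A *ᵥ x t))
    (r : ℕ → Fin N → ℂ)
    (hr : ∀ t, 1 ≤ t → ε t ≠ 0 →
      r t = (ε t)⁻¹ • (Aᴴ *ᵥ rhat t + ∑ i ∈ Finset.Icc 1 t, p t i • x i))
    (t : ℕ) (ht : 1 ≤ t) (hεt : ε t ≠ 0) :
    r t = xtrue + (ε t)⁻¹ • ((F t) *ᵥ n + ∑ i ∈ Finset.Icc 1 t, (H t i) *ᵥ f i) := by
  -- closed form for rhat
  have key : ∀ s : ℕ, 1 ≤ s →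
      rhat s = ∑ i ∈ Finset.Icc 1 s, (ϑ s i : ℂ) • (B ^ (s - i) *ᵥ (y - A *ᵥ x i)) := by
    intro s hs
    induction s, hs using Nat.le_induction with
    | base =>
      rw [hrec 1 le_rfl]
      simp [h0, hϑ 1 1 le_rfl le_rfl]
    | succ s hs ih =>
      rw [hrec (s + 1) (by omega)]
      simp only [Nat.add_sub_cancel]
      rw [ih, Finset.sum_Icc_succ_top (by omega : 1 ≤ s + 1)]
      rw [mulVec_sum']
      rw [Finset.smul_sum]
      congr 1
      · apply Finset.sum_congr rfl
        intro i hi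
        simp only [Finset.mem_Icc] at hi
        have h1 : ϑ (s + 1) i = θ (s + 1) * ϑ s i := by
          rw [hϑ _ _ hi.1 (by omega), hϑ _ _ hi.1 hi.2,
            Finset.prod_Icc_succ_top (by omega : i + 1 ≤ s + 1)]
          ring
        have h2 : s + 1 - i = (s - i) + 1 := by omega
        rw [Matrix.mulVec_smul, smul_smul, Matrix.mulVec_mulVec, ← pow_succ', h1, h2]
        push_cast
        rfl
      · rw [hϑ (s+1) (s+1) (by omega) le_rfl]
        simp
  -- the main algebraic identity
  have hcomb : Aᴴ *ᵥ rhat t + ∑ i ∈ Finset.Icc 1 t, p t i • x i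
      = ε t • xtrue + ((F t) *ᵥ n + ∑ i ∈ Finset.Icc 1 t, (H t i) *ᵥ f i) := by
    rw [key t ht, mulVec_sum', hF t ht, sum_mulVec', hε t ht, Finset.sum_smul,
      ← Finset.sum_add_distrib, ← Finset.sum_add_distrib, ← Finset.sum_add_distrib]
    apply Finset.sum_congr rfl
    intro i hi
    simp only [Finset.mem_Icc] at hi
    have hyx : y - A *ᵥ x i = n - A *ᵥ f i := by
      rw [hy, hx i, Matrix.mulVec_add]
      abel
    rw [hyx, hp t i hi.1 hi.2, hH t i hi.1 hi.2, hx i, hW]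
    rw [Matrix.mulVec_smul, Matrix.mulVec_mulVec, Matrix.mulVec_sub, Matrix.mulVec_mulVec,
      Matrix.smul_mulVec, Matrix.smul_mulVec, Matrix.sub_mulVec,
      Matrix.smul_mulVec, Matrix.one_mulVec]
    module
  -- conclude
  rw [hr t ht hεt, hcomb, smul_add, smul_smul, inv_mul_cancel₀ hεt, one_smul]
end

section
/- Let (Ω, 𝔉, ℙ) be a probability space and X, N : Ω → ℝ square-integrable random variables. Set R = X + N, X̂ = E[X | σ(R)], v = E[N²], and mse = E[(X̂ − X)²]. Assume v > 0 and ε := 1 − mse/v ≠ 0, and define the orthogonalized estimator φ(R) = (1/ε)(X̂ + (ε − 1) R). Then E[(φ(R) − X)·N] = 0; i.e., the error of the orthogonalized (divergence-free) estimator is uncorrelated with the noise. -/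
open MeasureTheory ProbabilityTheory

lemma myInt_mul {α : Type*} {m0 : MeasurableSpace α} {μ : Measure α} {f g : α → ℝ}
    (hf : MemLp f 2 μ) (hg : MemLp g 2 μ) : Integrable (fun x => f x * g x) μ := by
  have h := hf.smul (𝕜 := ℝ) hg (p := 2) (q := 2) (r := 1)
  rw [← memLp_one_iff_integrable]
  convert h using 1; funext x; simp [mul_comm]

lemma myMemLp_condexp {α : Type*} {m m0 : MeasurableSpace α} {μ : Measure α}
    [IsFiniteMeasure μ] (hm : m ≤ m0) {f : α → ℝ} (hf : MemLp f 2 μ) :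
    MemLp (μ[f|m]) 2 μ := by
  set g : Lp ℝ 2 μ := (condExpL2 ℝ ℝ hm (hf.toLp f) : Lp ℝ 2 μ) with hg
  have hae : (g : α → ℝ) =ᵐ[μ] μ[f|m] := by
    refine ae_eq_condExp_of_forall_setIntegral_eq hm (hf.integrable one_le_two)
      (fun s _ _ => ((Lp.memLp g).integrable one_le_two).integrableOn)
      (fun s hs hμs => ?_)
      (lpMeas.aestronglyMeasurable _)
    rw [integral_condExpL2_eq_of_fin_meas_real (hf.toLp f) hs hμs.ne]
    exact setIntegral_congr_ae (hm s hs) ((hf.coeFn_toLp).mono fun x hx _ => hx)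
  exact (Lp.memLp g).ae_eq hae

-- pull-out property in integral form
lemma myPullout {α : Type*} {m m0 : MeasurableSpace α} {μ : Measure α}
    [IsFiniteMeasure μ] (hm : m ≤ m0) {Z f : α → ℝ}
    (hZm : StronglyMeasurable[m] Z) (hZ2 : MemLp Z 2 μ) (hf2 : MemLp f 2 μ) :
    ∫ x, Z x * f x ∂μ = ∫ x, Z x * (μ[f|m]) x ∂μ := by
  haveI := isFiniteMeasure_trim (μ := μ) hm
  have hfmul : Integrable (Z * f) μ := myInt_mul hZ2 hf2
  have h := condExp_mul_of_stronglyMeasurable_left hZm hfmul (hf2.integrable one_le_two)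
  calc ∫ x, Z x * f x ∂μ = ∫ x, (μ[Z * f|m]) x ∂μ := (integral_condExp hm).symm
    _ = ∫ x, Z x * (μ[f|m]) x ∂μ := integral_congr_ae (h.mono fun x hx => hx)


/-- with `R = X + N`, `X̂ = E[X | σ(R)]`, `v = E[N²] > 0`,
`mse = E[(X̂ - X)²]`, `ε = 1 - mse/v ≠ 0`, the orthogonalized estimator
`φ(R) = (1/ε)(X̂ + (ε - 1)R)` satisfies `E[(φ(R) - X)·N] = 0`. -/
theorem orthogonalized_estimator_error_uncorrelated_with_noise
    {Ω : Type*} [MeasureSpace Ω] (hP : IsProbabilityMeasure (ℙ : Measure Ω))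
    (X N : Ω → ℝ) (hXm : Measurable X) (hNm : Measurable N)
    (hX2 : MemLp X 2 (ℙ : Measure Ω)) (hN2 : MemLp N 2 (ℙ : Measure Ω))
    (R : Ω → ℝ) (hR : R = X + N)
    (Xhat : Ω → ℝ)
    (hXhat : Xhat = (ℙ : Measure Ω)[X | MeasurableSpace.comap R inferInstance])
    (v : ℝ) (hv : v = ∫ ω, N ω ^ 2 ∂(ℙ : Measure Ω)) (hv0 : 0 < v)
    (mse : ℝ) (hmse : mse = ∫ ω, (Xhat ω - X ω) ^ 2 ∂(ℙ : Measure Ω))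
    (ε : ℝ) (hε : ε = 1 - mse / v) (hε0 : ε ≠ 0)
    (φ : Ω → ℝ) (hφ : φ = fun ω => (1 / ε) * (Xhat ω + (ε - 1) * R ω)) :
    ∫ ω, (φ ω - X ω) * N ω ∂(ℙ : Measure Ω) = 0 := by
  haveI := hP
  set μ := (ℙ : Measure Ω) with hμ
  have hRmeas : Measurable R := by rw [hR]; exact hXm.add hNm
  set m := MeasurableSpace.comap R inferInstance with hmdef
  have hm : m ≤ _ := hRmeas.comap_le
  have hR2 : MemLp R 2 μ := by rw [hR]; exact hX2.add hN2
  have hXhat2 : MemLp Xhat 2 μ := by rw [hXhat]; exact myMemLp_condexp hm hX2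
  have hXhatsm : StronglyMeasurable[m] Xhat := by rw [hXhat]; exact stronglyMeasurable_condExp
  have hRsm : StronglyMeasurable[m] R :=
    (Measurable.stronglyMeasurable (measurable_iff_comap_le.mpr le_rfl))
  -- key orthogonality facts
  have key1 : ∫ ω, R ω * X ω ∂μ = ∫ ω, R ω * Xhat ω ∂μ := by
    have := myPullout hm hRsm hR2 hX2
    rwa [← hXhat] at this
  have key2 : ∫ ω, Xhat ω * X ω ∂μ = ∫ ω, Xhat ω * Xhat ω ∂μ := by
    have := myPullout hm hXhatsm hXhat2 hX2
    rwa [← hXhat] at this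
  -- integrability of all products
  have iRXh : Integrable (fun ω => R ω * Xhat ω) μ := myInt_mul hR2 hXhat2
  have iRX : Integrable (fun ω => R ω * X ω) μ := myInt_mul hR2 hX2
  have iXhXh : Integrable (fun ω => Xhat ω * Xhat ω) μ := myInt_mul hXhat2 hXhat2
  have iXhX : Integrable (fun ω => Xhat ω * X ω) μ := myInt_mul hXhat2 hX2
  have iXX : Integrable (fun ω => X ω * X ω) μ := myInt_mul hX2 hX2
  have iDN : Integrable (fun ω => (Xhat ω - X ω) * N ω) μ :=
    myInt_mul (hXhat2.sub hX2) hN2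
  have iNN : Integrable (fun ω => N ω * N ω) μ := myInt_mul hN2 hN2
  -- I1 = mse
  have hI1 : ∫ ω, (Xhat ω - X ω) * N ω ∂μ = mse := by
    have e1 : (fun ω => (Xhat ω - X ω) * N ω) =
        fun ω => (R ω * Xhat ω - R ω * X ω) - (Xhat ω * X ω - X ω * X ω) := by
      funext ω
      have : N ω = R ω - X ω := by rw [hR]; simp
      rw [this]; ring
    have e2 : (fun ω => (Xhat ω - X ω) ^ 2) =
        fun ω => (Xhat ω * Xhat ω - Xhat ω * X ω) - (Xhat ω * X ω - X ω * X ω) := by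
      funext ω; ring
    have i1 : Integrable (fun ω => R ω * Xhat ω - R ω * X ω) μ := iRXh.sub iRX
    have i2 : Integrable (fun ω => Xhat ω * X ω - X ω * X ω) μ := iXhX.sub iXX
    have i3 : Integrable (fun ω => Xhat ω * Xhat ω - Xhat ω * X ω) μ := iXhXh.sub iXhX
    rw [e1, integral_sub i1 i2, integral_sub iRXh iRX,
      integral_sub iXhX iXX, hmse, e2,
      integral_sub i3 i2, integral_sub iXhXh iXhX,
      integral_sub iXhX iXX, key1, ← key2]
    ring
  -- decompose the goal integrand
  have expand : (fun ω => (φ ω - X ω) * N ω) =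
      fun ω => (1 / ε) * ((Xhat ω - X ω) * N ω) + ((ε - 1) / ε) * (N ω * N ω) := by
    funext ω
    have hRω : R ω = X ω + N ω := by rw [hR]; simp
    rw [hφ]; simp only; rw [hRω]; field_simp; ring
  have hvN : ∫ ω, N ω * N ω ∂μ = v := by
    rw [hv]; exact integral_congr_ae (Filter.Eventually.of_forall fun ω => by ring)
  rw [expand, integral_add (iDN.const_mul _) (iNN.const_mul _),
    integral_const_mul, integral_const_mul, hI1, hvN]
  have hmse_eq : mse = (1 - ε) * v := by
    rw [hε]; field_simp; ring
  rw [hmse_eq]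
  field_simp
  ring
end
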